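/- For integers q ≥ 2, t ≥ 1, r with 1 ≤ r < t, and β = ⌈(t+r)/2⌉, one has θ_{β-1}·(q^β + 1) ≤ θ_{t+r}, where θ_i = (q^i - 1)/(q - 1). -/
import Mathlib


/-- θ_i = (q^i - 1)/(q - 1). -/
def theta (q i : ℕ) : ℕ := (q ^ i - 1) / (q - 1)

private def S (q i : ℕ) : ℕ := ∑ j ∈ Finset.range i, q ^ j

private lemma S_succ (q i : ℕ) : S q (i + 1) = S q i + q ^ i := by
  simp [S, Finset.sum_range_succ]

private lemma S_mul (q : ℕ) (hq : 2 ≤ q) (i : ℕ) : (q - 1) * S q i = q ^ i - 1 := by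
  induction i with
  | zero => simp [S]
  | succ n ih =>
    have h1 : 1 ≤ q ^ n := Nat.one_le_pow _ _ (by omega)
    have h2 : q ^ (n + 1) = q * q ^ n := by ring
    have h3 : (q - 1) * q ^ n = q * q ^ n - q ^ n := by
      rw [Nat.sub_mul, one_mul]
    rw [S_succ, Nat.mul_add, ih, h3, h2]
    have h4 : q ^ n ≤ q * q ^ n := Nat.le_mul_of_pos_left _ (by omega)
    set X := q * q ^ n
    omega

private lemma theta_eq (q : ℕ) (hq : 2 ≤ q) (i : ℕ) : theta q i = S q i := by
  rw [theta, ← S_mul q hq i, Nat.mul_div_cancel_left _ (by omega)]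

private lemma S_add (q a b : ℕ) : S q (a + b) = S q a + q ^ a * S q b := by
  induction b with
  | zero => simp [S]
  | succ n ih =>
    rw [← Nat.add_assoc, S_succ, ih, S_succ, Nat.mul_add, pow_add]
    ring

private lemma S_mono (q : ℕ) {a b : ℕ} (h : a ≤ b) : S q a ≤ S q b := by
  exact Finset.sum_le_sum_of_subset (Finset.range_subset_range.mpr h)

private lemma mul_S_le (q : ℕ) (m : ℕ) : q * S q m ≤ S q (m + 1) := by
  induction m with
  | zero => simp [S]
  | succ n ih =>
    have hz : q * q ^ n = q ^ (n + 1) := by ring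
    rw [S_succ, Nat.mul_add, hz, S_succ, S_succ]
    rw [S_succ] at ih
    set W := q * S q n
    omega

theorem theta_beta_ineq (q t r : ℕ) (hq : 2 ≤ q) (ht : 1 ≤ t)
    (hr1 : 1 ≤ r) (hr2 : r < t) :
    theta q ((t + r + 1) / 2 - 1) * (q ^ ((t + r + 1) / 2) + 1) ≤ theta q (t + r) := by
  set m := t + r with hm
  set β := (m + 1) / 2 with hβ
  have hm3 : 3 ≤ m := by omega
  have hβ2 : 2 ≤ β := by omega
  set a := β - 1 with ha
  set b := m - a with hb
  have hab : a + b = m := by omega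
  have hβb : β ≤ b := by omega
  rw [theta_eq q hq, theta_eq q hq, ← hab, S_add]
  have key : S q a * q ^ β ≤ q ^ a * S q b := by
    have hβa : β = a + 1 := by omega
    calc S q a * q ^ β = q ^ a * (q * S q a) := by rw [hβa, pow_succ]; ring
      _ ≤ q ^ a * S q (a + 1) := Nat.mul_le_mul_left _ (mul_S_le q a)
      _ ≤ q ^ a * S q b := Nat.mul_le_mul_left _ (S_mono q (by omega))
  calc S q a * (q ^ β + 1) = S q a + S q a * q ^ β := by ring
    _ ≤ S q a + q ^ a * S q b := by omega
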